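/- The ordinal space ω₁ + 1 with the order topology has no monotone closure-preserving operator. -/

import Mathlib

open Set Topology Filter

variable {X : Type*}

/-- A family `F` of subsets is closure-preserving if for every subfamily `H ⊆ F`,
the closure of the union of `H` is the union of the closures of members of `H`. -/
def ClosurePreserving [TopologicalSpace X] (F : Set (Set X)) : Prop :=
  ∀ H ⊆ F, closure (⋃₀ H) = ⋃ A ∈ H, closure A

/-- A cover `A` refines a cover `B` if every member of `A` is contained in some member of `B`. -/
def Refines (A B : Set (Set X)) : Prop :=
  ∀ s ∈ A, ∃ t ∈ B, s ⊆ t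

/-- An open cover of the space. -/
def IsOpenCover [TopologicalSpace X] (U : Set (Set X)) : Prop :=
  (∀ s ∈ U, IsOpen s) ∧ ⋃₀ U = Set.univ

/-- A monotone closure-preserving operator: assigns to each open cover `U` a
closure-preserving cover `r U` (by arbitrary sets) refining `U`, monotonically. -/
def MonotoneCPOperator [TopologicalSpace X] (r : Set (Set X) → Set (Set X)) : Prop :=
  (∀ U, IsOpenCover U →
    ⋃₀ r U = Set.univ ∧ Refines (r U) U ∧ ClosurePreserving (r U)) ∧
  ∀ U V, IsOpenCover U → IsOpenCover V → Refines U V → Refines (r U) (r V)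

/-- A GO-space: the topology is finer than the order topology (all open rays are open)
and has a base of order-convex sets. -/
def IsGOSpace (X : Type*) [LinearOrder X] [TopologicalSpace X] : Prop :=
  (∀ a : X, IsOpen (Set.Iio a)) ∧ (∀ a : X, IsOpen (Set.Ioi a)) ∧
  ∀ s : Set X, IsOpen s → ∀ x ∈ s, ∃ t : Set X, IsOpen t ∧ x ∈ t ∧ t ⊆ s ∧ t.OrdConnected

noncomputable section

namespace Stmt12Aux

abbrev Y : Type 1 := {o : Ordinal.{0} // o ≤ (Cardinal.aleph 1).ord}

/-- ω₁ as ordinal -/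
def w1 : Ordinal.{0} := (Cardinal.aleph 1).ord

theorem w1_isLimit : Order.IsSuccLimit w1 := Cardinal.isSuccLimit_ord (Cardinal.aleph0_le_aleph 1)

/-- The top element. -/
def Om : Y := ⟨w1, le_rfl⟩

theorem lt_Om_iff {x : Y} : x < Om ↔ x.1 < w1 := Iff.rfl

/-- successor inside the space -/
def succX (x : Y) (h : x < Om) : Y :=
  ⟨x.1 + 1, by
    rw [Ordinal.add_one_eq_succ]
    exact (w1_isLimit.succ_lt h).le⟩

theorem lt_succX_iff {x : Y} {h : x < Om} {y : Y} : y < succX x h ↔ y ≤ x := by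
  show y.1 < x.1 + 1 ↔ y.1 ≤ x.1
  rw [Ordinal.add_one_eq_succ, Order.lt_succ_iff]

theorem succX_lt_Om {x : Y} (h : x < Om) : succX x h < Om := by
  show x.1 + 1 < w1
  rw [Ordinal.add_one_eq_succ]
  exact w1_isLimit.succ_lt h

/-- The covers `{Iic β : β < Ω} ∪ {Ioi η}`. -/
def V (η : Y) : Set (Set Y) :=
  insert (Set.Ioi η) {s | ∃ β : Y, β < Om ∧ s = Set.Iic β}

end Stmt12Aux

end

open Stmt12Aux in
/-- `ω₁ + 1` with the order topology has no monotone closure-preserving operator. -/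
theorem stmt12 :
    ¬ ∃ r : Set (Set {o : Ordinal.{0} // o ≤ (Cardinal.aleph 1).ord}) →
        Set (Set {o : Ordinal.{0} // o ≤ (Cardinal.aleph 1).ord}),
      @MonotoneCPOperator _ (Preorder.topology _) r := by
  rintro ⟨r, hr⟩
  letI : TopologicalSpace Y := Preorder.topology Y
  haveI : OrderTopology Y := ⟨rfl⟩
  -- basic facts
  have hIicIio : ∀ (β : Y) (h : β < Om), Set.Iic β = Set.Iio (succX β h) := by
    intro β h
    ext x
    simp [lt_succX_iff]
  have hVopen : ∀ η : Y, η < Om → IsOpenCover (V η) := by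
    intro η hη
    constructor
    · rintro s (rfl | ⟨β, hβ, rfl⟩)
      · exact isOpen_Ioi
      · rw [hIicIio β hβ]; exact isOpen_Iio
    · apply Set.eq_univ_of_forall
      intro x
      rcases lt_or_eq_of_le x.2 with h | h
      · exact ⟨Set.Iic x, Or.inr ⟨x, h, rfl⟩, Set.self_mem_Iic⟩
      · refine ⟨Set.Ioi η, Or.inl rfl, ?_⟩
        show η < x
        exact lt_of_lt_of_le hη (le_of_eq (Subtype.ext h.symm))
  have hVref : ∀ η η' : Y, η ≤ η' → Refines (V η') (V η) := by
    rintro η η' hle s (rfl | ⟨β, hβ, rfl⟩)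
    · exact ⟨Set.Ioi η, Or.inl rfl, Set.Ioi_subset_Ioi hle⟩
    · exact ⟨Set.Iic β, Or.inr ⟨β, hβ, rfl⟩, le_rfl⟩
  obtain ⟨hop, hmono⟩ := hr
  -- the key dichotomy coming from closure preservation at Ω
  have key : ∀ η : Y, η < Om → ∃ η' : Y, η < η' ∧ η' < Om ∧
      ∀ A ∈ r (V η), A ⊆ Set.Iio η' ∨ A ⊆ Set.Ioi η := by
    intro η hη
    obtain ⟨hcov, href, hcp⟩ := hop (V η) (hVopen η hη)
    set H : Set (Set Y) := {A ∈ r (V η) | Om ∉ closure A} with hHdef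
    have hHsub : H ⊆ r (V η) := Set.sep_subset _ _
    have hcpH := hcp H hHsub
    have hOm : Om ∉ closure (⋃₀ H) := by
      rw [hcpH]
      simp only [Set.mem_iUnion]
      rintro ⟨A, hA, hmem⟩
      exact hA.2 hmem
    have hnhds : (closure (⋃₀ H))ᶜ ∈ 𝓝 Om :=
      isClosed_closure.isOpen_compl.mem_nhds hOm
    obtain ⟨l, hl, hIoc⟩ := exists_Ioc_subset_of_mem_nhds hnhds
      ⟨η, hη⟩
    have hmax : max l η < Om := max_lt hl hη
    refine ⟨succX (max l η) hmax, ?_, succX_lt_Om hmax, ?_⟩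
    · have : max l η < succX (max l η) hmax := by
        rw [lt_succX_iff]
      exact lt_of_le_of_lt (le_max_right l η) this
    · intro A hA
      by_cases hsub : A ⊆ Set.Iio (succX (max l η) hmax)
      · exact Or.inl hsub
      · right
        obtain ⟨x, hxA, hx⟩ := Set.not_subset.mp hsub
        have hxgt : max l η < x := by
          have hge : succX (max l η) hmax ≤ x := not_lt.mp (by simpa using hx)
          exact lt_of_lt_of_le (by rw [lt_succX_iff]) hge
        have hxIoc : x ∈ Set.Ioc l Om :=
          ⟨lt_of_le_of_lt (le_max_left l η) hxgt, x.2⟩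
        have hxW : x ∉ closure (⋃₀ H) := hIoc hxIoc
        have hOmA : Om ∈ closure A := by
          by_contra hnc
          exact hxW (subset_closure ⟨A, ⟨hA, hnc⟩, hxA⟩)
        obtain ⟨t, ht, hAt⟩ := href A hA
        rcases ht with rfl | ⟨β, hβ, rfl⟩
        · exact hAt
        · exfalso
          have : Om ∈ Set.Iic β := by
            have := closure_mono hAt
            rw [isClosed_Iic.closure_eq] at this
            exact this hOmA
          exact absurd (lt_of_le_of_lt this hβ) (lt_irrefl _)
  -- iterate
  classical
  let f : Y → Y := fun η => if h : η < Om then Classical.choose (key η h) else η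
  have hf : ∀ η : Y, ∀ h : η < Om, η < f η ∧ f η < Om ∧
      ∀ A ∈ r (V η), A ⊆ Set.Iio (f η) ∨ A ⊆ Set.Ioi η := by
    intro η h
    simp only [f, dif_pos h]
    exact Classical.choose_spec (key η h)
  let z : Y := ⟨0, zero_le⟩
  let g : ℕ → Y := fun n => f^[n] z
  have hg0 : g 0 = z := rfl
  have hgs : ∀ n, g (n + 1) = f (g n) := fun n => Function.iterate_succ_apply' f n z
  have hglt : ∀ n, g n < Om := by
    intro n
    induction n with
    | zero => exact w1_isLimit.pos
    | succ n ih => rw [hgs]; exact (hf (g n) ih).2.1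
  have hgmono : ∀ n, g n < g (n + 1) := by
    intro n; rw [hgs]; exact (hf (g n) (hglt n)).1
  -- the limit
  have hsup : (⨆ n, (g n).1) < w1 := by
    apply Ordinal.iSup_lt_ord
    · have h1 : w1.cof = Cardinal.aleph 1 := Cardinal.isRegular_aleph_one.cof_eq
      rw [h1, Cardinal.mk_nat]
      exact Cardinal.aleph0_lt_aleph_one
    · exact fun n => hglt n
  let lam : Y := ⟨⨆ n, (g n).1, hsup.le⟩
  have hglam : ∀ n, g n ≤ lam := fun n => Ordinal.le_iSup (fun n => (g n).1) n
  have hglam' : ∀ n, g n < lam := fun n => lt_of_lt_of_le (hgmono n) (hglam (n + 1))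
  have hlam : lam < Om := hsup
  -- members of r (V lam) whose closure contains lam lie in [lam, Ω]
  obtain ⟨hcovL, hrefL, hcpL⟩ := hop (V lam) (hVopen lam hlam)
  have hRef : ∀ n, Refines (r (V lam)) (r (V (g n))) := fun n =>
    hmono (V lam) (V (g n)) (hVopen lam hlam) (hVopen (g n) (hglt n))
      (hVref (g n) lam (hglam n))
  have step5 : ∀ A ∈ r (V lam), lam ∈ closure A → ∀ x ∈ A, lam ≤ x := by
    intro A hA hcl x hx
    have hax : ∀ n, g n < x := by
      intro n
      obtain ⟨B, hB, hAB⟩ := hRef n A hA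
      rcases (hf (g n) (hglt n)).2.2 B hB with hBlow | hBhigh
      · exfalso
        have h1 : closure A ⊆ Set.Iic (f (g n)) :=
          (closure_mono (hAB.trans hBlow)).trans
            (by rw [← isClosed_Iic.closure_eq]; exact closure_mono Set.Iio_subset_Iic_self)
        have h2 : lam ≤ f (g n) := h1 hcl
        have h3 : f (g n) < lam := by rw [← hgs]; exact hglam' (n + 1)
        exact absurd (lt_of_le_of_lt h2 h3) (lt_irrefl _)
      · exact hBhigh (hAB hx)
    show lam.1 ≤ x.1
    exact Ordinal.iSup_le fun n => (hax n).le
  -- closure preservation at lam from below gives a contradiction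
  set H : Set (Set Y) := {A ∈ r (V lam) | lam ∉ A} with hHdef
  have hHsub : H ⊆ r (V lam) := Set.sep_subset _ _
  have hIio : Set.Iio lam ⊆ ⋃₀ H := by
    intro x hx
    have : x ∈ ⋃₀ r (V lam) := by rw [hcovL]; trivial
    obtain ⟨A, hA, hxA⟩ := this
    refine ⟨A, ⟨hA, fun hlamA => ?_⟩, hxA⟩
    exact absurd (step5 A hA (subset_closure hlamA) x hxA) (not_le.mpr hx)
  have hlamcl : lam ∈ closure (Set.Iio lam) := by
    rw [mem_closure_iff_nhds]
    intro t ht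
    obtain ⟨l, hl, hIoc⟩ := exists_Ioc_subset_of_mem_nhds ht ⟨g 0, hglam' 0⟩
    have : ∃ n, l < g n := by
      by_contra hcon
      push_neg at hcon
      have : lam.1 ≤ l.1 := Ordinal.iSup_le fun n => (hcon n : g n ≤ l)
      exact absurd (lt_of_le_of_lt this hl) (lt_irrefl _)
    obtain ⟨n, hn⟩ := this
    exact ⟨g n, hIoc ⟨hn, hglam n⟩, hglam' n⟩
  have hlamcl2 : lam ∈ closure (⋃₀ H) := closure_mono hIio hlamcl
  rw [hcpL H hHsub] at hlamcl2
  simp only [Set.mem_iUnion] at hlamcl2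
  obtain ⟨A, ⟨hA, hlamA⟩, hmem⟩ := hlamcl2
  -- A ⊆ Ioi lam which is closed, yet lam ∈ closure A
  have hsub : A ⊆ Set.Ioi lam := by
    intro x hx
    exact lt_of_le_of_ne (step5 A hA hmem x hx) (fun h => hlamA (h ▸ hx))
  have hclosed : IsClosed (Set.Ioi lam) := by
    have : Set.Ioi lam = Set.Ici (succX lam hlam) := by
      ext x
      constructor
      · intro hx
        show (lam.1 + 1 : Ordinal) ≤ x.1
        rw [Ordinal.add_one_eq_succ, Order.succ_le_iff]
        exact hx
      · intro hx
        have : (lam.1 + 1 : Ordinal) ≤ x.1 := hx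
        rw [Ordinal.add_one_eq_succ, Order.succ_le_iff] at this
        exact this
    rw [this]
    exact isClosed_Ici
  have : lam ∈ Set.Ioi lam := by
    rw [← hclosed.closure_eq]
    exact closure_mono hsub hmem
  exact lt_irrefl lam this
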